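/- Let A_1, ..., A_k be finite subsets of ℤ^n. Then the following two conditions are equivalent: (1) for every non-empty subset J ⊆ {1,...,k}, the dimension of the ℚ-linear span of ⋃_{j∈J} A_j is at least |J| + 1; (2) for every 1 ≤ j ≤ k, there exist v_1 ∈ A_1, ..., v_{j-1} ∈ A_{j-1} and u_1, u_2 ∈ A_j such that v_1, ..., v_{j-1}, u_1, u_2 are linearly independent over ℚ. -/

import Mathlib

open scoped BigOperators

noncomputable section

open Module Submodule

/-- Rado's theorem for vector matroids: if every subfamily's union spans a subspace of
dimension at least the number of sets, then there is a linearly independent transversal. -/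
private lemma rado_aux {K V : Type*} [Field K] [AddCommGroup V] [Module K V]
    [FiniteDimensional K V] [DecidableEq V] {m : ℕ} :
    ∀ (N : ℕ) (B : Fin m → Finset V), (∑ i, (B i).card ≤ N) →
    (∀ I : Finset (Fin m),
      I.card ≤ finrank K (span K ((I.biUnion B : Finset V) : Set V))) →
    ∃ f : Fin m → V, (∀ i, f i ∈ B i) ∧ LinearIndependent K f := by
  intro N
  induction N using Nat.strong_induction_on with
  | _ N IH =>
  intro B hsum hcond
  by_cases hsmall : ∀ i, (B i).card ≤ 1
  · -- all sets are singletons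
    have hne : ∀ i, (B i).Nonempty := by
      intro i
      by_contra hemp
      rw [Finset.not_nonempty_iff_eq_empty] at hemp
      have := hcond {i}
      rw [Finset.singleton_biUnion, hemp] at this
      simp at this
    choose f hf using hne
    have hBi : ∀ i, B i = {f i} := by
      intro i
      apply Finset.eq_singleton_iff_unique_mem.mpr
      exact ⟨hf i, fun b hb => Finset.card_le_one.mp (hsmall i) b hb (f i) (hf i)⟩
    refine ⟨f, hf, ?_⟩
    rw [linearIndependent_iff_card_le_finrank_span]
    have hr : Set.range f = ((Finset.univ.biUnion B : Finset V) : Set V) := by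
      ext a
      simp [hBi, eq_comm]
    rw [Set.finrank, hr]
    simpa using hcond Finset.univ
  · push_neg at hsmall
    obtain ⟨i, hi⟩ := hsmall
    rw [Finset.one_lt_card] at hi
    obtain ⟨x, hx, y, hy, hxy⟩ := hi
    have hdec : ∀ z ∈ B i, ∑ i', ((Function.update B i ((B i).erase z)) i').card < N := by
      intro z hz
      have h1 : ∑ i', ((Function.update B i ((B i).erase z)) i').card
          = ((B i).erase z).card + ∑ i' ∈ Finset.univ.erase i, (B i').card := by
        rw [← Finset.add_sum_erase Finset.univ
          (fun i' => ((Function.update B i ((B i).erase z)) i').card) (Finset.mem_univ i)]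
        congr 1
        · simp
        · refine Finset.sum_congr rfl fun c hc => ?_
          rw [Function.update_of_ne (Finset.ne_of_mem_erase hc)]
      have h2 : (B i).card + ∑ i' ∈ Finset.univ.erase i, (B i').card = ∑ i', (B i').card :=
        Finset.add_sum_erase Finset.univ (fun i' => (B i').card) (Finset.mem_univ i)
      have h3 : ((B i).erase z).card = (B i).card - 1 := Finset.card_erase_of_mem hz
      have h4 : 0 < (B i).card := Finset.card_pos.mpr ⟨z, hz⟩
      omega
    by_cases hcx : ∀ I : Finset (Fin m),
        I.card ≤ finrank K (span K ((I.biUnion (Function.update B i ((B i).erase x)) : Finset V) : Set V))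
    · obtain ⟨f, hf, hli⟩ := IH _ (hdec x hx) _ le_rfl hcx
      refine ⟨f, fun i' => ?_, hli⟩
      rcases eq_or_ne i' i with rfl | h
      · have := hf i'
        rw [Function.update_self] at this
        exact Finset.erase_subset _ _ this
      · have := hf i'
        rwa [Function.update_of_ne h] at this
    · by_cases hcy : ∀ I : Finset (Fin m),
          I.card ≤ finrank K (span K ((I.biUnion (Function.update B i ((B i).erase y)) : Finset V) : Set V))
      · obtain ⟨f, hf, hli⟩ := IH _ (hdec y hy) _ le_rfl hcy
        refine ⟨f, fun i' => ?_, hli⟩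
        rcases eq_or_ne i' i with rfl | h
        · have := hf i'
          rw [Function.update_self] at this
          exact Finset.erase_subset _ _ this
        · have := hf i'
          rwa [Function.update_of_ne h] at this
      · exfalso
        push_neg at hcx hcy
        obtain ⟨I, hI⟩ := hcx
        obtain ⟨J, hJ⟩ := hcy
        set Bx := Function.update B i ((B i).erase x) with hBxdef
        set By := Function.update B i ((B i).erase y) with hBydef
        have hiI : i ∈ I := by
          by_contra h
          have heq : I.biUnion Bx = I.biUnion B :=
            Finset.biUnion_congr rfl (fun c hc => Function.update_of_ne (by rintro rfl; exact h hc) _ _)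
          rw [heq] at hI
          exact absurd (hcond I) (not_le.mpr hI)
        have hiJ : i ∈ J := by
          by_contra h
          have heq : J.biUnion By = J.biUnion B :=
            Finset.biUnion_congr rfl (fun c hc => Function.update_of_ne (by rintro rfl; exact h hc) _ _)
          rw [heq] at hJ
          exact absurd (hcond J) (not_le.mpr hJ)
        set S := span K ((I.biUnion Bx : Finset V) : Set V) with hSdef
        set T := span K ((J.biUnion By : Finset V) : Set V) with hTdef
        -- union bound
        have h1 : ((I ∪ J).biUnion B : Finset V) ⊆ I.biUnion Bx ∪ J.biUnion By := by
          intro a ha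
          rw [Finset.mem_biUnion] at ha
          obtain ⟨c, hc, hac⟩ := ha
          rw [Finset.mem_union, Finset.mem_biUnion, Finset.mem_biUnion]
          rcases eq_or_ne c i with rfl | hci
          · rcases eq_or_ne a x with rfl | hax
            · exact Or.inr ⟨c, hiJ, by rw [hBydef, Function.update_self, Finset.mem_erase]; exact ⟨hxy, hac⟩⟩
            · exact Or.inl ⟨c, hiI, by rw [hBxdef, Function.update_self, Finset.mem_erase]; exact ⟨hax, hac⟩⟩
          · rcases Finset.mem_union.mp hc with h | h
            · exact Or.inl ⟨c, h, by rwa [hBxdef, Function.update_of_ne hci]⟩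
            · exact Or.inr ⟨c, h, by rwa [hBydef, Function.update_of_ne hci]⟩
        have hsup : (I ∪ J).card ≤ finrank K ↥(S ⊔ T) := by
          refine (hcond (I ∪ J)).trans (Submodule.finrank_mono ?_)
          rw [hSdef, hTdef, ← Submodule.span_union, ← Finset.coe_union]
          exact Submodule.span_mono (Finset.coe_subset.mpr h1)
        have h2x : (((I ∩ J).erase i).biUnion B : Finset V) ⊆ I.biUnion Bx := by
          intro a ha
          rw [Finset.mem_biUnion] at ha ⊢
          obtain ⟨c, hc, hac⟩ := ha
          obtain ⟨hci, hcIJ⟩ := Finset.mem_erase.mp hc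
          exact ⟨c, (Finset.mem_inter.mp hcIJ).1, by rwa [hBxdef, Function.update_of_ne hci]⟩
        have h2y : (((I ∩ J).erase i).biUnion B : Finset V) ⊆ J.biUnion By := by
          intro a ha
          rw [Finset.mem_biUnion] at ha ⊢
          obtain ⟨c, hc, hac⟩ := ha
          obtain ⟨hci, hcIJ⟩ := Finset.mem_erase.mp hc
          exact ⟨c, (Finset.mem_inter.mp hcIJ).2, by rwa [hBydef, Function.update_of_ne hci]⟩
        have hinf : ((I ∩ J).erase i).card ≤ finrank K ↥(S ⊓ T) := by
          refine (hcond ((I ∩ J).erase i)).trans (Submodule.finrank_mono (le_inf ?_ ?_))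
          · exact Submodule.span_mono (Finset.coe_subset.mpr h2x)
          · exact Submodule.span_mono (Finset.coe_subset.mpr h2y)
        have hsubmod := Submodule.finrank_sup_add_finrank_inf_eq S T
        have hcard := Finset.card_union_add_card_inter I J
        have hiIJ : i ∈ I ∩ J := Finset.mem_inter.mpr ⟨hiI, hiJ⟩
        have hcerase : ((I ∩ J).erase i).card = (I ∩ J).card - 1 :=
          Finset.card_erase_of_mem hiIJ
        have hpos : 0 < (I ∩ J).card := Finset.card_pos.mpr ⟨i, hiIJ⟩
        omega

/-- The rational vector corresponding to an integer vector. -/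
def ratVec {n : ℕ} (v : Fin n → ℤ) : Fin n → ℚ := fun i => (v i : ℚ)

/-- Dimension of the ℚ-linear span of a set of integer vectors. -/
def spanDim {n : ℕ} (S : Set (Fin n → ℤ)) : ℕ :=
  Module.finrank ℚ (Submodule.span ℚ (ratVec '' S))

private lemma spanDim_biUnion {n k : ℕ} (A : Fin k → Finset (Fin n → ℤ)) (J : Finset (Fin k)) :
    spanDim (⋃ j ∈ J, (A j : Set (Fin n → ℤ))) =
    finrank ℚ (span ℚ ((J.biUnion (fun a => (A a).image ratVec) : Finset (Fin n → ℚ)) : Set (Fin n → ℚ))) := by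
  have hset : ratVec '' (⋃ j ∈ J, (A j : Set (Fin n → ℤ)))
      = ((J.biUnion (fun a => (A a).image ratVec) : Finset (Fin n → ℚ)) : Set (Fin n → ℚ)) := by
    ext x
    simp only [Set.mem_image, Set.mem_iUnion, Finset.coe_biUnion, Finset.mem_coe,
      Finset.coe_image, Finset.mem_biUnion, Finset.mem_image]
    aesop
  unfold spanDim
  rw [hset]

/-- Lemma-Definition 2.2: the two formulations of the dragon marriage independent
transversal (DMIT) condition are equivalent. -/
theorem dmit_equivalence {n k : ℕ} (A : Fin k → Finset (Fin n → ℤ)) :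
    (∀ J : Finset (Fin k), J.Nonempty →
      J.card + 1 ≤ spanDim (⋃ j ∈ J, (A j : Set (Fin n → ℤ)))) ↔
    (∀ j : Fin k, ∃ v : Fin j.1 → (Fin n → ℤ), ∃ u₁ u₂ : Fin n → ℤ,
      (∀ i : Fin j.1, v i ∈ A ⟨i.1, i.2.trans j.2⟩) ∧ u₁ ∈ A j ∧ u₂ ∈ A j ∧
      LinearIndependent ℚ
        (Sum.elim (fun i => ratVec (v i)) ![ratVec u₁, ratVec u₂])) := by
  constructor
  · -- (1) → (2), via Rado's theorem
    intro h1 j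
    set φ : Fin (j.1 + 2) → Fin k :=
      fun i => if h : i.1 < j.1 then (⟨i.1, h.trans j.2⟩ : Fin k) else j with hφdef
    set B : Fin (j.1 + 2) → Finset (Fin n → ℚ) := fun i => (A (φ i)).image ratVec with hBdef
    have hφval : ∀ c : Fin (j.1 + 2), c.1 < j.1 + 1 → (φ c).1 = c.1 := by
      intro c hc
      by_cases h : c.1 < j.1
      · simp [hφdef, h]
      · have hcj : c.1 = j.1 := by omega
        simp [hφdef, h, hcj]
    have hrado := rado_aux (K := ℚ) (V := Fin n → ℚ) (∑ i, (B i).card) B le_rfl ?_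
    · obtain ⟨f, hf, hli⟩ := hrado
      have hBlow : ∀ c : Fin (j.1 + 2), (hc : c.1 < j.1) →
          ∃ w ∈ A ⟨c.1, hc.trans j.2⟩, ratVec w = f c := by
        intro c hc
        have hm := hf c
        rw [show B c = (A (φ c)).image ratVec from rfl,
          show φ c = ⟨c.1, hc.trans j.2⟩ from dif_pos hc, Finset.mem_image] at hm
        exact hm
      have hBhigh : ∀ c : Fin (j.1 + 2), ¬ (c.1 < j.1) →
          ∃ w ∈ A j, ratVec w = f c := by
        intro c hc
        have hm := hf c
        rw [show B c = (A (φ c)).image ratVec from rfl,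
          show φ c = j from dif_neg hc, Finset.mem_image] at hm
        exact hm
      have hv : ∀ i : Fin j.1, ∃ w ∈ A ⟨i.1, i.2.trans j.2⟩,
          ratVec w = f ⟨i.1, by omega⟩ := fun i => hBlow ⟨i.1, by omega⟩ i.2
      choose v hvmem hveq using hv
      obtain ⟨u₁, hu₁mem, hu₁eq⟩ := hBhigh ⟨j.1, by omega⟩ (lt_irrefl j.1)
      obtain ⟨u₂, hu₂mem, hu₂eq⟩ := hBhigh ⟨j.1 + 1, by omega⟩ (by simp)
      refine ⟨v, u₁, u₂, hvmem, hu₁mem, hu₂mem, ?_⟩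
      set e : Fin j.1 ⊕ Fin 2 → Fin (j.1 + 2) :=
        fun s => match s with
          | .inl i => ⟨i.1, by omega⟩
          | .inr b => ⟨j.1 + b.1, by omega⟩ with hedef
      have heinj : Function.Injective e := by
        rintro (a | a) (b | b) h <;> simp only [hedef] at h
        · have hv := congrArg Fin.val h
          exact congrArg Sum.inl (Fin.ext hv)
        · exact absurd (congrArg Fin.val h) (by simp; omega)
        · exact absurd (congrArg Fin.val h) (by simp; omega)
        · refine congrArg Sum.inr (Fin.ext ?_)
          have := congrArg Fin.val h
          simpa using this
      have he : Sum.elim (fun i => ratVec (v i)) ![ratVec u₁, ratVec u₂] = f ∘ e := by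
        funext s
        rcases s with i | b
        · exact hveq i
        · fin_cases b
          · exact hu₁eq
          · exact hu₂eq
      rw [he]
      exact hli.comp e heinj
    · -- verify Rado's condition
      intro I
      rcases I.eq_empty_or_nonempty with rfl | hI
      · simp
      · have hJne : (I.image φ).Nonempty := hI.image φ
        have h1' := h1 (I.image φ) hJne
        rw [spanDim_biUnion] at h1'
        rw [Finset.image_biUnion] at h1'
        have hBB : (I.biUnion fun a => (A (φ a)).image ratVec) = I.biUnion B := rfl
        rw [hBB] at h1'
        -- card bound
        set t : Fin (j.1 + 2) := ⟨j.1 + 1, by omega⟩ with htdef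
        have hinj : Set.InjOn φ ↑(I.erase t) := by
          intro a ha b hb hab
          have ha' : a.1 < j.1 + 1 := by
            have h1 : a ≠ t := (Finset.mem_erase.mp (by exact_mod_cast ha)).1
            have h2 : a.1 ≠ j.1 + 1 := fun h => h1 (Fin.ext h)
            have := a.2
            omega
          have hb' : b.1 < j.1 + 1 := by
            have h1 : b ≠ t := (Finset.mem_erase.mp (by exact_mod_cast hb)).1
            have h2 : b.1 ≠ j.1 + 1 := fun h => h1 (Fin.ext h)
            have := b.2
            omega
          apply Fin.ext
          rw [← hφval a ha', ← hφval b hb', hab]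
        have h3 : (I.erase t).card ≤ (I.image φ).card := by
          calc (I.erase t).card = ((I.erase t).image φ).card :=
                (Finset.card_image_of_injOn hinj).symm
            _ ≤ (I.image φ).card :=
                Finset.card_le_card (Finset.image_subset_image (Finset.erase_subset _ _))
        have h4 : I.card - 1 ≤ (I.erase t).card := Finset.pred_card_le_card_erase
        omega
  · -- (2) → (1)
    intro h2 J hJ
    set m := J.max' hJ with hmdef
    obtain ⟨v, u₁, u₂, hv, hu₁, hu₂, hli⟩ := h2 m
    rw [spanDim_biUnion]
    have hlt : ∀ a ∈ J.erase m, a.1 < m.1 := by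
      intro a ha
      obtain ⟨hne, haJ⟩ := Finset.mem_erase.mp ha
      have hle : a ≤ m := J.le_max' a haJ
      have : a.1 ≤ m.1 := hle
      exact lt_of_le_of_ne this (fun h => hne (Fin.ext h))
    set g : Fin m.1 ⊕ Fin 2 → (Fin n → ℚ) :=
      Sum.elim (fun i => ratVec (v i)) ![ratVec u₁, ratVec u₂] with hgdef
    set e : {a : Fin k // a ∈ J.erase m} ⊕ Fin 2 → Fin m.1 ⊕ Fin 2 :=
      Sum.map (fun a : {a : Fin k // a ∈ J.erase m} => (⟨a.1.1, hlt a.1 a.2⟩ : Fin m.1)) id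
      with hedef
    have heinj : Function.Injective e :=
      Function.Injective.sumMap
        (fun a b h => by
          have hv := congrArg Fin.val h
          exact Subtype.ext (Fin.ext hv))
        Function.injective_id
    have hbli : LinearIndependent ℚ (g ∘ e) := hli.comp e heinj
    have hcard : Fintype.card ({a : Fin k // a ∈ J.erase m} ⊕ Fin 2) = J.card + 1 := by
      rw [Fintype.card_sum, Fintype.card_coe, Fintype.card_fin,
        Finset.card_erase_of_mem (J.max'_mem hJ)]
      have : 1 ≤ J.card := Finset.card_pos.mpr hJ
      omega
    have hrange : Set.range (g ∘ e) ⊆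
        ((J.biUnion (fun a => (A a).image ratVec) : Finset (Fin n → ℚ)) : Set (Fin n → ℚ)) := by
      rintro _ ⟨s, rfl⟩
      rcases s with a | b
      · show g (e (.inl a)) ∈ _
        rw [Finset.mem_coe, Finset.mem_biUnion]
        refine ⟨a.1, Finset.mem_of_mem_erase a.2, ?_⟩
        exact Finset.mem_image_of_mem _ (hv ⟨a.1.1, hlt a.1 a.2⟩)
      · fin_cases b
        · show g (e (.inr 0)) ∈ _
          rw [Finset.mem_coe, Finset.mem_biUnion]
          exact ⟨m, J.max'_mem hJ, Finset.mem_image_of_mem _ hu₁⟩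
        · show g (e (.inr 1)) ∈ _
          rw [Finset.mem_coe, Finset.mem_biUnion]
          exact ⟨m, J.max'_mem hJ, Finset.mem_image_of_mem _ hu₂⟩
    calc J.card + 1 = Fintype.card ({a : Fin k // a ∈ J.erase m} ⊕ Fin 2) := hcard.symm
      _ = finrank ℚ (span ℚ (Set.range (g ∘ e))) := (finrank_span_eq_card hbli).symm
      _ ≤ finrank ℚ (span ℚ ((J.biUnion (fun a => (A a).image ratVec) : Finset (Fin n → ℚ)) : Set (Fin n → ℚ))) :=
          Submodule.finrank_mono (Submodule.span_mono hrange)
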